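/- Assume α > 1. For every d ≥ 1, the conditional expectation of the true potential given that the perceived potential is at least d satisfies E[Z | Ẑ ≥ d] = (α/(α−1))·d·((1−p) + p·β^{α−1})/((1−p) + p·β^α). In particular, since β ∈ (0,1), this strictly exceeds (α/(α−1))·d = E[Z | Z ≥ d], the corresponding average in the unbiased setting. -/

import Mathlib

open Set MeasureTheory Filter Topology


lemma my_tail_le {Ω : Type*} [MeasurableSpace Ω] (μ : Measure Ω) [IsProbabilityMeasure μ]
    {α : ℝ} (hα : 0 < α) {Z : Ω → ℝ}
    (hZ : ∀ t : ℝ, 1 ≤ t → μ {ω | t < Z ω} = ENNReal.ofReal (t ^ (-α)))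
    {c : ℝ} (hc : 1 ≤ c) : μ {ω | c ≤ Z ω} = ENNReal.ofReal (c ^ (-α)) := by
  have hc0 : 0 < c := lt_of_lt_of_le one_pos hc
  refine le_antisymm ?_ ?_
  · rcases eq_or_lt_of_le hc with h | h
    · rw [← h]
      simp only [Real.one_rpow, ENNReal.ofReal_one]
      exact prob_le_one
    · -- use sequence t n = c - (c-1)/(n+1)
      set t : ℕ → ℝ := fun n => c - (c - 1) / (n + 1) with ht
      have hc1 : 0 < c - 1 := by linarith
      have htn1 : ∀ n : ℕ, 1 ≤ t n := by
        intro n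
        have h1 : (c - 1) / ((n : ℝ) + 1) ≤ c - 1 := by
          apply div_le_self hc1.le
          have : (0:ℝ) ≤ n := Nat.cast_nonneg n
          linarith
        simp only [ht]; linarith
      have htnc : ∀ n : ℕ, t n < c := by
        intro n
        have : 0 < (c - 1) / ((n : ℝ) + 1) := by positivity
        simp only [ht]; linarith
      have hbound : ∀ n : ℕ, μ {ω | c ≤ Z ω} ≤ ENNReal.ofReal ((t n) ^ (-α)) := by
        intro n
        rw [← hZ (t n) (htn1 n)]
        exact measure_mono fun ω hω => lt_of_lt_of_le (htnc n) hω
      have htend : Tendsto t atTop (𝓝 c) := by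
        have h0 : Tendsto (fun n : ℕ => (c - 1) / ((n : ℝ) + 1)) atTop (𝓝 0) := by
          apply Tendsto.div_atTop tendsto_const_nhds
          exact tendsto_atTop_add_const_right _ 1 tendsto_natCast_atTop_atTop
        have h1 : Tendsto (fun n : ℕ => c - (c - 1) / ((n : ℝ) + 1)) atTop (𝓝 (c - 0)) :=
          Tendsto.sub tendsto_const_nhds h0
        simpa using h1
      have hrtend : Tendsto (fun n : ℕ => ENNReal.ofReal ((t n) ^ (-α))) atTop
          (𝓝 (ENNReal.ofReal (c ^ (-α)))) := by
        apply (ENNReal.continuous_ofReal.tendsto _).comp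
        exact ((Real.continuousAt_rpow_const c (-α) (Or.inl hc0.ne')).tendsto).comp htend
      exact ge_of_tendsto' hrtend hbound
  · rw [← hZ c hc]
    exact measure_mono fun ω (hω : c < Z ω) => le_of_lt hω


lemma my_lint {Ω : Type*} [MeasurableSpace Ω] (μ : Measure Ω) [IsProbabilityMeasure μ]
    {α : ℝ} (hα : 1 < α) {Z : Ω → ℝ} (hZmeas : Measurable Z)
    (hZ : ∀ t : ℝ, 1 ≤ t → μ {ω | t < Z ω} = ENNReal.ofReal (t ^ (-α)))
    (hZtail : ∀ c : ℝ, 1 ≤ c → μ {ω | c ≤ Z ω} = ENNReal.ofReal (c ^ (-α)))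
    (hZ1 : ∀ᵐ ω ∂μ, 1 < Z ω)
    {c : ℝ} (hc : 1 ≤ c) :
    ∫⁻ ω in {ω | c ≤ Z ω}, ENNReal.ofReal (Z ω) ∂μ
      = ENNReal.ofReal (c ^ (1 - α) * (α / (α - 1))) := by
  have hc0 : 0 < c := lt_of_lt_of_le one_pos hc
  have hα1 : 0 < α - 1 := by linarith
  have hs : MeasurableSet {ω | c ≤ Z ω} := measurableSet_le measurable_const hZmeas
  have hnn : 0 ≤ᵐ[μ.restrict {ω | c ≤ Z ω}] Z := by
    filter_upwards [ae_restrict_of_ae hZ1] with ω hω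
    simp only [Pi.zero_apply]; linarith
  rw [lintegral_eq_lintegral_meas_lt _ hnn hZmeas.aemeasurable]
  have hrw : ∀ t ∈ Ioi (0:ℝ),
      (μ.restrict {ω | c ≤ Z ω}) {a | t < Z a}
        = (if t < c then ENNReal.ofReal (c ^ (-α)) else ENNReal.ofReal (t ^ (-α))) := by
    intro t ht
    rw [Measure.restrict_apply (measurableSet_lt measurable_const hZmeas)]
    split_ifs with h
    · -- t < c : intersection = {c ≤ Z}
      have : {a | t < Z a} ∩ {ω | c ≤ Z ω} = {ω | c ≤ Z ω} := by
        ext ω; simp only [mem_inter_iff, mem_setOf_eq, and_iff_right_iff_imp]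
        intro hω; linarith
      rw [this, hZtail c hc]
    · -- c ≤ t : intersection = {t < Z}
      push_neg at h
      have : {a | t < Z a} ∩ {ω | c ≤ Z ω} = {a | t < Z a} := by
        ext ω; simp only [mem_inter_iff, mem_setOf_eq, and_iff_left_iff_imp]
        intro hω; linarith
      rw [this, hZ t (le_trans hc h)]
  rw [setLIntegral_congr_fun_ae measurableSet_Ioi (ae_of_all _ hrw)]
  have hsplit : Ioi (0:ℝ) = Ioc 0 c ∪ Ioi c := (Ioc_union_Ioi_eq_Ioi hc0.le).symm
  rw [hsplit, lintegral_union measurableSet_Ioi (Ioc_disjoint_Ioi le_rfl)]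
  have h1 : ∫⁻ t in Ioc (0:ℝ) c,
      (if t < c then ENNReal.ofReal (c ^ (-α)) else ENNReal.ofReal (t ^ (-α)))
      = ENNReal.ofReal (c ^ (1 - α)) := by
    have heq : ∀ t ∈ Ioc (0:ℝ) c,
        (if t < c then ENNReal.ofReal (c ^ (-α)) else ENNReal.ofReal (t ^ (-α)))
          = ENNReal.ofReal (c ^ (-α)) := by
      intro t ht
      split_ifs with h
      · rfl
      · push_neg at h
        have : t = c := le_antisymm ht.2 h
        rw [this]
    rw [setLIntegral_congr_fun_ae measurableSet_Ioc (ae_of_all _ heq), lintegral_const,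
      Measure.restrict_apply MeasurableSet.univ, univ_inter, Real.volume_Ioc,
      ← ENNReal.ofReal_mul (by positivity)]
    congr 1
    rw [sub_zero, show (1:ℝ) - α = -α + 1 by ring, Real.rpow_add hc0, Real.rpow_one]
  have h2 : ∫⁻ t in Ioi c,
      (if t < c then ENNReal.ofReal (c ^ (-α)) else ENNReal.ofReal (t ^ (-α)))
      = ENNReal.ofReal (c ^ (1 - α) / (α - 1)) := by
    have heq : ∀ t ∈ Ioi c,
        (if t < c then ENNReal.ofReal (c ^ (-α)) else ENNReal.ofReal (t ^ (-α)))
          = ENNReal.ofReal (t ^ (-α)) := by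
      intro t ht
      rw [if_neg (not_lt.2 (le_of_lt ht))]
    rw [setLIntegral_congr_fun_ae measurableSet_Ioi (ae_of_all _ heq)]
    have hint : IntegrableOn (fun t : ℝ => t ^ (-α)) (Ioi c) :=
      integrableOn_Ioi_rpow_of_lt (by linarith) hc0
    rw [← ofReal_integral_eq_lintegral_ofReal hint]
    · congr 1
      rw [integral_Ioi_rpow_of_lt (by linarith) hc0]
      rw [show -α + 1 = -(α - 1) by ring, Real.rpow_neg hc0.le]
      rw [show (1:ℝ) - α = -(α-1) by ring, Real.rpow_neg hc0.le, ← neg_div_neg_eq]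
      ring_nf
    · filter_upwards [ae_restrict_mem measurableSet_Ioi] with t ht
      exact Real.rpow_nonneg (hc0.trans ht).le _
  rw [h1, h2, ← ENNReal.ofReal_add (Real.rpow_nonneg hc0.le _)
    (div_nonneg (Real.rpow_nonneg hc0.le _) (by linarith))]
  congr 1
  field_simp
  ring

lemma my_setint {Ω : Type*} [MeasurableSpace Ω] (μ : Measure Ω) [IsProbabilityMeasure μ]
    {α : ℝ} (hα : 1 < α) {Z : Ω → ℝ} (hZmeas : Measurable Z)
    (hZ : ∀ t : ℝ, 1 ≤ t → μ {ω | t < Z ω} = ENNReal.ofReal (t ^ (-α)))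
    (hZtail : ∀ c : ℝ, 1 ≤ c → μ {ω | c ≤ Z ω} = ENNReal.ofReal (c ^ (-α)))
    (hZ1 : ∀ᵐ ω ∂μ, 1 < Z ω)
    {c : ℝ} (hc : 1 ≤ c) :
    IntegrableOn Z {ω | c ≤ Z ω} μ ∧
    ∫ ω in {ω | c ≤ Z ω}, Z ω ∂μ = c ^ (1 - α) * (α / (α - 1)) := by
  have hc0 : 0 < c := lt_of_lt_of_le one_pos hc
  have hα1 : 0 < α - 1 := by linarith
  have key := my_lint μ hα hZmeas hZ hZtail hZ1 hc
  have hnn : 0 ≤ᵐ[μ.restrict {ω | c ≤ Z ω}] Z := by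
    filter_upwards [ae_restrict_of_ae hZ1] with ω hω
    simp only [Pi.zero_apply]; linarith
  have hint : IntegrableOn Z {ω | c ≤ Z ω} μ := by
    refine ⟨hZmeas.aestronglyMeasurable, ?_⟩
    rw [hasFiniteIntegral_iff_ofReal hnn, key]
    exact ENNReal.ofReal_lt_top
  refine ⟨hint, ?_⟩
  rw [integral_eq_lintegral_of_nonneg_ae hnn hZmeas.aestronglyMeasurable, key,
    ENNReal.toReal_ofReal]
  exact mul_nonneg (Real.rpow_nonneg hc0.le _) (by positivity)

lemma my_split {Ω : Type*} [MeasurableSpace Ω] (μ : Measure Ω) [IsProbabilityMeasure μ]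
    {Z B : Ω → ℝ} (hZmeas : Measurable Z) (hBmeas : Measurable B)
    (hind : ProbabilityTheory.IndepFun Z B μ)
    {s : Set ℝ} (hs : MeasurableSet s) (c : ℝ) :
    ∫ ω in B ⁻¹' s ∩ {ω | c ≤ Z ω}, Z ω ∂μ
      = (μ (B ⁻¹' s)).toReal * ∫ ω in {ω | c ≤ Z ω}, Z ω ∂μ := by
  set g : ℝ → ℝ := (Ici c).indicator id with hg
  set h : ℝ → ℝ := s.indicator (fun _ => (1:ℝ)) with hh
  have hgm : Measurable g := measurable_id.indicator measurableSet_Ici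
  have hhm : Measurable h := measurable_const.indicator hs
  have hcZ : MeasurableSet {ω | c ≤ Z ω} := measurableSet_le measurable_const hZmeas
  have hind2 : ProbabilityTheory.IndepFun (g ∘ Z) (h ∘ B) μ := hind.comp hgm hhm
  have hgZ : g ∘ Z = {ω | c ≤ Z ω}.indicator Z := by
    ext ω
    by_cases hcz : c ≤ Z ω <;>
      simp [hg, Set.indicator, hcz]
  have hhB : h ∘ B = (B ⁻¹' s).indicator (fun _ => (1:ℝ)) := by
    ext ω
    by_cases hb : B ω ∈ s <;> simp [hh, Set.indicator, hb]
  have hprod : (g ∘ Z) * (h ∘ B) = (B ⁻¹' s ∩ {ω | c ≤ Z ω}).indicator Z := by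
    ext ω
    by_cases hb : B ω ∈ s <;> by_cases hcz : c ≤ Z ω <;>
      simp [hg, hh, Set.indicator, hb, hcz]
  have := hind2.integral_mul_eq_mul_integral (hgm.comp hZmeas).aestronglyMeasurable
    (hhm.comp hBmeas).aestronglyMeasurable
  rw [hprod, hgZ, hhB] at this
  rw [integral_indicator (hBmeas hs |>.inter hcZ)] at this
  rw [integral_indicator hcZ, integral_indicator (hBmeas hs)] at this
  rw [this]
  simp [mul_comm, Measure.real]



/-- Conditional expectation of the true potential given perceived potential at
least `d`: it equals `(α/(α-1))·d·((1-p)+pβ^{α-1})/((1-p)+pβ^α)`, which strictly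
exceeds the unbiased conditional average `E[Z | Z ≥ d] = (α/(α-1))·d`. -/
theorem conditional_expectation_given_perceived
    {Ω : Type*} [MeasurableSpace Ω] (μ : Measure Ω) [IsProbabilityMeasure μ]
    (α β p : ℝ) (hα : 1 < α) (hβ : β ∈ Ioo (0:ℝ) 1) (hp : p ∈ Ioo (0:ℝ) 1)
    (Z B : Ω → ℝ) (hZmeas : Measurable Z) (hBmeas : Measurable B)
    (hZ : ∀ t : ℝ, 1 ≤ t → μ {ω | t < Z ω} = ENNReal.ofReal (t ^ (-α)))
    (hB01 : ∀ ω, B ω = 0 ∨ B ω = 1)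
    (hBp : μ {ω | B ω = 1} = ENNReal.ofReal p)
    (hind : ProbabilityTheory.IndepFun Z B μ)
    (Zhat : Ω → ℝ) (hZhat : ∀ ω, Zhat ω = if B ω = 1 then β * Z ω else Z ω)
    (d : ℝ) (hd : 1 ≤ d) :
    (∫ ω in {ω | d ≤ Zhat ω}, Z ω ∂μ) / (μ {ω | d ≤ Zhat ω}).toReal
      = (α / (α - 1)) * d * ((1 - p) + p * β ^ (α - 1)) / ((1 - p) + p * β ^ α) ∧
    (∫ ω in {ω | d ≤ Z ω}, Z ω ∂μ) / (μ {ω | d ≤ Z ω}).toReal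
      = (α / (α - 1)) * d ∧
    (α / (α - 1)) * d
      < (∫ ω in {ω | d ≤ Zhat ω}, Z ω ∂μ) / (μ {ω | d ≤ Zhat ω}).toReal := by
  obtain ⟨hβ0, hβ1⟩ := hβ
  obtain ⟨hp0, hp1⟩ := hp
  have hα0 : 0 < α := by linarith
  have hα1 : 0 < α - 1 := by linarith
  have hd0 : 0 < d := lt_of_lt_of_le one_pos hd
  have h1p : 0 < 1 - p := by linarith
  -- Z > 1 a.e.
  have hZ1 : ∀ᵐ ω ∂μ, 1 < Z ω := by
    have h1 : μ {ω | 1 < Z ω} = 1 := by rw [hZ 1 le_rfl]; simp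
    rw [ae_iff]
    have hcpl : {ω | ¬ 1 < Z ω} = {ω | 1 < Z ω}ᶜ := by ext ω; simp
    rw [hcpl]
    exact (prob_compl_eq_zero_iff (measurableSet_lt measurable_const hZmeas)).2 h1
  have hZtail : ∀ c : ℝ, 1 ≤ c → μ {ω | c ≤ Z ω} = ENNReal.ofReal (c ^ (-α)) :=
    fun c hc => my_tail_le μ hα0 hZ hc
  have hsetint := fun (c : ℝ) (hc : 1 ≤ c) => my_setint μ hα hZmeas hZ hZtail hZ1 hc
  -- unbiased part
  have part2 : (∫ ω in {ω | d ≤ Z ω}, Z ω ∂μ) / (μ {ω | d ≤ Z ω}).toReal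
      = (α / (α - 1)) * d := by
    rw [(hsetint d hd).2, hZtail d hd,
      ENNReal.toReal_ofReal (Real.rpow_nonneg hd0.le _)]
    have hdpow : d ^ (1 - α) = d * d ^ (-α) := by
      rw [show (1:ℝ) - α = 1 + -α by ring, Real.rpow_add hd0, Real.rpow_one]
    rw [hdpow]
    have hne : d ^ (-α) ≠ 0 := (Real.rpow_pos_of_pos hd0 _).ne'
    field_simp
  -- perceived part
  have hc1 : 1 ≤ d / β := by
    rw [le_div_iff₀ hβ0]
    nlinarith
  have hdb0 : 0 < d / β := by positivity
  have hcZd : MeasurableSet {ω | d ≤ Z ω} := measurableSet_le measurable_const hZmeas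
  have hcZdb : MeasurableSet {ω | d / β ≤ Z ω} := measurableSet_le measurable_const hZmeas
  have hA1 : MeasurableSet (B ⁻¹' ({1} : Set ℝ)) := hBmeas (measurableSet_singleton 1)
  have hA0 : MeasurableSet (B ⁻¹' (({1} : Set ℝ)ᶜ)) := hBmeas (measurableSet_singleton 1).compl
  have hset : {ω | d ≤ Zhat ω}
      = (B ⁻¹' ({1} : Set ℝ) ∩ {ω | d / β ≤ Z ω}) ∪ (B ⁻¹' (({1} : Set ℝ)ᶜ) ∩ {ω | d ≤ Z ω}) := by
    ext ω
    rcases hB01 ω with hb | hb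
    · simp [hZhat ω, hb]
    · simp [hZhat ω, hb, div_le_iff₀ hβ0, mul_comm]
  have hdisj : Disjoint (B ⁻¹' ({1} : Set ℝ) ∩ {ω | d / β ≤ Z ω})
      (B ⁻¹' (({1} : Set ℝ)ᶜ) ∩ {ω | d ≤ Z ω}) :=
    Disjoint.mono inf_le_left inf_le_left (disjoint_compl_right.preimage B)
  -- probabilities
  have hB1 : μ (B ⁻¹' ({1} : Set ℝ)) = ENNReal.ofReal p := hBp
  have hB0 : μ (B ⁻¹' (({1} : Set ℝ)ᶜ)) = ENNReal.ofReal (1 - p) := by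
    rw [preimage_compl, measure_compl hA1 (measure_ne_top μ _), measure_univ, hB1,
      ENNReal.ofReal_sub 1 hp0.le, ENNReal.ofReal_one]
  have mInter : ∀ (s : Set ℝ), MeasurableSet s → ∀ c : ℝ, 1 ≤ c →
      μ (B ⁻¹' s ∩ {ω | c ≤ Z ω}) = μ (B ⁻¹' s) * ENNReal.ofReal (c ^ (-α)) := by
    intro s hs c hc
    rw [inter_comm, show {ω | c ≤ Z ω} = Z ⁻¹' (Ici c) from rfl,
      hind.measure_inter_preimage_eq_mul _ _ measurableSet_Ici hs,
      show Z ⁻¹' Ici c = {ω | c ≤ Z ω} from rfl, hZtail c hc, mul_comm]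
  -- rpow identities
  have key1 : (d / β) ^ (-α) = d ^ (-α) * β ^ α := by
    rw [Real.div_rpow hd0.le hβ0.le, Real.rpow_neg hβ0.le α, division_def, inv_inv]
  have key2 : (d / β) ^ (1 - α) = d ^ (1 - α) * β ^ (α - 1) := by
    have hb : β ^ ((1:ℝ) - α) = (β ^ (α - 1))⁻¹ := by
      rw [show (1:ℝ) - α = -(α - 1) by ring, Real.rpow_neg hβ0.le]
    rw [Real.div_rpow hd0.le hβ0.le, hb, division_def, inv_inv]
  have hβα : 0 < β ^ α := Real.rpow_pos_of_pos hβ0 _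
  have hβα1 : 0 < β ^ (α - 1) := Real.rpow_pos_of_pos hβ0 _
  have hD0 : 0 < (1 - p) + p * β ^ α := by nlinarith
  have hN0 : 0 < (1 - p) + p * β ^ (α - 1) := by nlinarith
  -- denominator
  have hden : μ {ω | d ≤ Zhat ω} = ENNReal.ofReal (d ^ (-α) * ((1 - p) + p * β ^ α)) := by
    rw [hset, measure_union hdisj (hA0.inter hcZd),
      mInter _ (measurableSet_singleton 1) _ hc1,
      mInter _ (measurableSet_singleton 1).compl _ hd,
      hB1, hB0, ← ENNReal.ofReal_mul hp0.le, ← ENNReal.ofReal_mul h1p.le,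
      ← ENNReal.ofReal_add (by positivity) (by positivity)]
    rw [key1]
    ring_nf
  -- numerator
  have hnum : ∫ ω in {ω | d ≤ Zhat ω}, Z ω ∂μ
      = (α / (α - 1)) * d ^ (1 - α) * ((1 - p) + p * β ^ (α - 1)) := by
    rw [hset, setIntegral_union hdisj (hA0.inter hcZd)
      (((hsetint _ hc1).1).mono_set inter_subset_right)
      (((hsetint _ hd).1).mono_set inter_subset_right),
      my_split μ hZmeas hBmeas hind (measurableSet_singleton 1) (d / β),
      my_split μ hZmeas hBmeas hind (measurableSet_singleton 1).compl d,
      hB1, hB0, ENNReal.toReal_ofReal hp0.le, ENNReal.toReal_ofReal h1p.le,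
      (hsetint _ hc1).2, (hsetint _ hd).2, key2]
    ring
  have hdpow : d ^ (1 - α) = d * d ^ (-α) := by
    rw [show (1:ℝ) - α = 1 + -α by ring, Real.rpow_add hd0, Real.rpow_one]
  have hdα : 0 < d ^ (-α) := Real.rpow_pos_of_pos hd0 _
  have part1 : (∫ ω in {ω | d ≤ Zhat ω}, Z ω ∂μ) / (μ {ω | d ≤ Zhat ω}).toReal
      = (α / (α - 1)) * d * ((1 - p) + p * β ^ (α - 1)) / ((1 - p) + p * β ^ α) := by
    rw [hnum, hden, ENNReal.toReal_ofReal (by positivity), hdpow]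
    rw [div_eq_div_iff (by positivity) hD0.ne']
    ring
  refine ⟨part1, part2, ?_⟩
  rw [part1]
  have hβpow : β ^ α < β ^ (α - 1) :=
    Real.rpow_lt_rpow_of_exponent_gt hβ0 hβ1 (by linarith)
  have hAd : 0 < (α / (α - 1)) * d := mul_pos (div_pos hα0 hα1) hd0
  rw [lt_div_iff₀ hD0]
  have : (1 - p) + p * β ^ α < (1 - p) + p * β ^ (α - 1) := by nlinarith
  calc (α / (α - 1)) * d * ((1 - p) + p * β ^ α)
      < (α / (α - 1)) * d * ((1 - p) + p * β ^ (α - 1)) := (mul_lt_mul_iff_right₀ hAd).2 this
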